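/- Let ℓ ≥ 5 be a prime and a ≥ 1 an integer. Then for every integer x ≥ 1, one has k(ℓ,a,1,x) ≤ p_ℓ(x)·ℓ^(a·x). -/

import Mathlib

/-- `multipartitions b w` is the number of `b`-multipartitions of `w`. -/
noncomputable def multipartitions (b w : ℕ) : ℕ :=
  Nat.card {f : Fin b → Σ n : ℕ, n.Partition // (∑ i, (f i).1) = w}

/-- An `ℓ`-composition of `w` is a finitely supported sequence `(w₀, w₁, …)` of
non-negative integers with `∑ i, w_i * ℓ^i = w`; `numLCompositions ℓ w` counts them. -/
noncomputable def numLCompositions (ℓ w : ℕ) : ℕ :=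
  Nat.card {f : ℕ →₀ ℕ // (f.sum fun i c => c * ℓ ^ i) = w}

/-- `kSum ℓ a d w = Σ k(d+(ℓ^a−1)/d, w₀) · ∏_{i≥1} k((ℓ^a−ℓ^{a−1})/d, w_i)`, the sum
running over all `ℓ`-compositions `(w₀, w₁, …)` of `w`.  (Since `k(b, 0) = 1`, the
product over `i ≥ 1` may be taken over the nonzero entries of the composition.) -/
noncomputable def kSum (ℓ a d w : ℕ) : ℕ :=
  ∑ᶠ (f : ℕ →₀ ℕ) (_ : (f.sum fun i c => c * ℓ ^ i) = w),
    multipartitions (d + (ℓ ^ a - 1) / d) (f 0) *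
      ∏ i ∈ f.support.erase 0, multipartitions ((ℓ ^ a - ℓ ^ (a - 1)) / d) (f i)

open Finset

/-- number of partitions of `t`. -/
noncomputable def partCount (t : ℕ) : ℕ := Nat.card (Nat.Partition t)

lemma partCount_le (t : ℕ) : partCount t ≤ 2 ^ (t - 1) := by
  have hinj : Function.Injective (fun p : Nat.Partition t =>
      (⟨p.parts.sort (· ≤ ·),
        fun {i} hi => p.parts_pos ((Multiset.mem_sort _).1 hi),
        by
          have h := Multiset.sort_eq (s := p.parts) (r := (· ≤ ·))
          calc (p.parts.sort (· ≤ ·)).sum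
              = ((p.parts.sort (· ≤ ·) : List ℕ) : Multiset ℕ).sum := (Multiset.sum_coe _).symm
            _ = p.parts.sum := by rw [h]
            _ = t := p.parts_sum⟩ :
        Composition t)) := by
    intro p q h
    have h1 : p.parts.sort (· ≤ ·) = q.parts.sort (· ≤ ·) := congrArg Composition.blocks h
    have h2 : ((p.parts.sort (· ≤ ·) : List ℕ) : Multiset ℕ) = (q.parts.sort (· ≤ ·) : List ℕ) :=
      congrArg _ h1
    rcases p with ⟨pp, _, _⟩; rcases q with ⟨qq, _, _⟩
    simp only [Multiset.sort_eq] at h2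
    simpa using h2
  calc partCount t ≤ Nat.card (Composition t) := Nat.card_le_card_of_injective _ hinj
    _ = 2 ^ (t - 1) := by rw [Nat.card_eq_fintype_card, composition_card]

/-- the step equivalence -/
def stepEquiv (b w : ℕ) :
    {f : Fin (b+1) → Σ n : ℕ, n.Partition // (∑ i, (f i).1) = w} ≃
      Σ t : Fin (w+1), Nat.Partition (t : ℕ) ×
        {g : Fin b → Σ n : ℕ, n.Partition // (∑ i, (g i).1) = w - (t : ℕ)} where
  toFun x := ⟨⟨(x.1 0).1, by
      have hx := x.2
      rw [Fin.sum_univ_succ] at hx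
      omega⟩, (x.1 0).2, ⟨fun i => x.1 i.succ, by
      show (∑ i : Fin b, (x.1 i.succ).1) = w - (x.1 0).1
      have hx := x.2
      rw [Fin.sum_univ_succ] at hx
      omega⟩⟩
  invFun y := ⟨Fin.cons ⟨(y.1 : ℕ), y.2.1⟩ y.2.2.1, by
    rw [Fin.sum_univ_succ]
    simp only [Fin.cons_zero, Fin.cons_succ]
    have := y.2.2.2
    have h1 : (y.1 : ℕ) ≤ w := Nat.lt_succ_iff.1 y.1.2
    omega⟩
  left_inv x := by
    apply Subtype.ext
    funext i
    induction i using Fin.cases with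
    | zero => rfl
    | succ i => rfl
  right_inv := fun ⟨⟨t, ht⟩, π, g, hg⟩ => by
    refine Sigma.ext rfl (heq_of_eq ?_)
    exact Prod.ext rfl (Subtype.ext (funext fun i => rfl))

lemma mpFinite (b : ℕ) : ∀ w, Finite {f : Fin b → Σ n : ℕ, n.Partition // (∑ i, (f i).1) = w} := by
  induction b with
  | zero =>
    intro w
    exact Finite.of_subsingleton
  | succ b ih =>
    intro w
    haveI : ∀ t : Fin (w+1),
        Finite {g : Fin b → Σ n : ℕ, n.Partition // (∑ i, (g i).1) = w - (t : ℕ)} :=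
      fun t => ih _
    exact Finite.of_equiv _ (stepEquiv b w).symm

lemma mp_zero (w : ℕ) : multipartitions 0 w = if w = 0 then 1 else 0 := by
  rcases Nat.eq_zero_or_pos w with rfl | hw
  · simp only [if_pos rfl, multipartitions]
    have : Unique {f : Fin 0 → Σ n : ℕ, n.Partition // (∑ i, (f i).1) = 0} :=
      { default := ⟨Fin.elim0, by simp⟩
        uniq := fun x => Subtype.ext (funext fun i => i.elim0) }
    exact Nat.card_unique
  · rw [if_neg (by omega), multipartitions]
    have : IsEmpty {f : Fin 0 → Σ n : ℕ, n.Partition // (∑ i, (f i).1) = w} := by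
      constructor; rintro ⟨f, hf⟩; simp at hf; omega
    exact Nat.card_of_isEmpty

lemma mp_succ (b w : ℕ) :
    multipartitions (b+1) w = ∑ t ∈ range (w+1), partCount t * multipartitions b (w - t) := by
  haveI := mpFinite (b+1) w
  haveI : ∀ t : Fin (w+1),
      Finite {g : Fin b → Σ n : ℕ, n.Partition // (∑ i, (g i).1) = w - (t : ℕ)} :=
    fun t => mpFinite b _
  rw [multipartitions, Nat.card_congr (stepEquiv b w)]
  letI : ∀ t : Fin (w+1), Fintype (Nat.Partition (t : ℕ) ×
      {g : Fin b → Σ n : ℕ, n.Partition // (∑ i, (g i).1) = w - (t : ℕ)}) :=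
    fun t => Fintype.ofFinite _
  rw [Nat.card_eq_fintype_card, Fintype.card_sigma]
  rw [← Fin.sum_univ_eq_sum_range (fun t => partCount t * multipartitions b (w - t)) (w+1)]
  refine Finset.sum_congr rfl fun i _ => ?_
  rw [← Nat.card_eq_fintype_card, Nat.card_prod]
  rfl

def Uaux : ℕ → ℕ → ℕ
  | 0, w => if w = 0 then 1 else 0
  | b+1, w => ∑ t ∈ range (w+1), 2 ^ (t-1) * Uaux b (w - t)

lemma Uaux_one (w : ℕ) : Uaux 1 w = 2 ^ (w - 1) := by
  rw [Uaux, Finset.sum_range_succ, Finset.sum_eq_zero, Nat.sub_self]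
  · simp [Uaux]
  · intro t ht
    rw [Uaux]
    rw [if_neg (by simp at ht; omega)]
    ring

lemma Uaux_step (b w : ℕ) :
    Uaux (b+1) (w+1) + Uaux b w = Uaux b (w+1) + 2 * Uaux (b+1) w := by
  have h1 : Uaux (b+1) (w+1) =
      (∑ r ∈ range w, 2 ^ (r+1) * Uaux b (w - (r+1))) + Uaux b w + Uaux b (w+1) := by
    rw [Uaux, Finset.sum_range_succ']
    have : ∀ s ∈ range (w+1), 2 ^ ((s+1)-1) * Uaux b (w+1-(s+1)) = 2 ^ s * Uaux b (w - s) := by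
      intro s _; norm_num [Nat.succ_sub_succ]
    rw [Finset.sum_congr rfl this, Finset.sum_range_succ']
    simp only [pow_zero, one_mul, Nat.sub_zero, pow_succ]
    ring_nf
  have h2 : 2 * Uaux (b+1) w = (∑ r ∈ range w, 2 ^ (r+1) * Uaux b (w - (r+1))) + 2 * Uaux b w := by
    rw [Uaux, Finset.mul_sum, Finset.sum_range_succ']
    have : ∀ r ∈ range w, 2 * (2 ^ ((r+1)-1) * Uaux b (w - (r+1)))
        = 2 ^ (r+1) * Uaux b (w - (r+1)) := by
      intro r _; rw [Nat.add_sub_cancel]; ring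
    rw [Finset.sum_congr rfl this]
    simp only [Nat.sub_zero, pow_zero, one_mul]
    ring_nf
  omega

lemma Uaux_two_step (w : ℕ) : Uaux 2 (w+2) = 2 * Uaux 2 (w+1) + 2 ^ w := by
  have h := Uaux_step 1 (w+1)
  rw [Uaux_one, Uaux_one] at h
  have e1 : Uaux (1+1) (w+1+1) = Uaux 2 (w+2) := rfl
  have e2 : Uaux (1+1) (w+1) = Uaux 2 (w+1) := rfl
  rw [e1, e2] at h
  simp only [Nat.add_sub_cancel] at h
  have : (2:ℕ) ^ (w + 1) = 2 * 2 ^ w := by ring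
  omega

lemma Uaux_two_val0 : Uaux 2 0 = 1 := by decide
lemma Uaux_two_val1 : Uaux 2 1 = 2 := by decide
lemma Uaux_three_val0 : Uaux 3 0 = 1 := by decide
lemma Uaux_three_val1 : Uaux 3 1 = 3 := by decide

lemma V_lemma : ∀ w, Uaux 2 (w+1) + 2 ^ w ≤ 3 ^ (w+1) := by
  intro w
  induction w with
  | zero => rw [Uaux_two_val1]; norm_num
  | succ w ih =>
    have h := Uaux_two_step w
    have e1 : Uaux 2 (w+1+1) = Uaux 2 (w+2) := rfl
    rw [show w+1+1 = w+2 from rfl]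
    have h2 : (2:ℕ) ^ (w+1) = 2 * 2 ^ w := by ring
    have h3 : (3:ℕ) ^ (w+2) = 3 * 3 ^ (w+1) := by ring
    have h4 : (2:ℕ) ^ w ≤ 3 ^ (w+1) := le_trans (Nat.pow_le_pow_left (by norm_num) w)
      (Nat.pow_le_pow_right (by norm_num) (by omega))
    omega

lemma W_lemma : ∀ w, Uaux 3 w ≤ 3 ^ w := by
  have key : ∀ w, Uaux 3 (w+1) ≤ 3 ^ (w+1) := by
    intro w
    induction w with
    | zero => rw [Uaux_three_val1]; norm_num
    | succ w ih =>
      have h := Uaux_step 2 (w+1)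
      have e1 : Uaux (2+1) (w+1+1) = Uaux 3 (w+2) := rfl
      have e2 : Uaux (2+1) (w+1) = Uaux 3 (w+1) := rfl
      have e3 : Uaux 2 (w+1+1) = Uaux 2 (w+2) := rfl
      rw [e1, e2, e3] at h
      rw [show w+1+1 = w+2 from rfl]
      have hv := V_lemma w
      have h3 : (3:ℕ) ^ (w+2) = 3 * 3 ^ (w+1) := by ring
      have h2 := Uaux_two_step w
      omega
  intro w
  cases w with
  | zero => rw [Uaux_three_val0]; norm_num
  | succ w => exact key w

lemma conv_le (B : ℕ) (hB : 1 ≤ B) :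
    ∀ w, (∑ t ∈ range (w+1), 2 ^ (t-1) * B ^ (w-t)) ≤ (B+1) ^ w := by
  intro w
  induction w with
  | zero => simp
  | succ w ih =>
    have hstep : (∑ t ∈ range (w+2), 2 ^ (t-1) * B ^ (w+1-t))
        = B * (∑ t ∈ range (w+1), 2 ^ (t-1) * B ^ (w-t)) + 2 ^ w := by
      rw [Finset.sum_range_succ, Finset.mul_sum]
      have : ∀ t ∈ range (w+1), 2 ^ (t-1) * B ^ (w+1-t) = B * (2 ^ (t-1) * B ^ (w-t)) := by
        intro t ht
        simp only [mem_range] at ht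
        rw [show w+1-t = (w-t)+1 by omega, pow_succ]
        ring
      rw [Finset.sum_congr rfl this]
      simp only [Nat.add_sub_cancel, Nat.sub_self, pow_zero, mul_one]
    rw [hstep]
    have h2 : (2:ℕ) ^ w ≤ (B+1) ^ w := Nat.pow_le_pow_left (by omega) w
    have h3 : (B+1) ^ (w+1) = B * (B+1) ^ w + (B+1) ^ w := by ring
    have h4 : B * (∑ t ∈ range (w+1), 2 ^ (t-1) * B ^ (w-t)) ≤ B * (B+1) ^ w :=
      Nat.mul_le_mul_left _ ih
    omega

lemma mp_le_U : ∀ b w, multipartitions b w ≤ Uaux b w := by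
  intro b
  induction b with
  | zero => intro w; rw [mp_zero, Uaux]
  | succ b ih =>
    intro w
    rw [mp_succ, Uaux]
    exact Finset.sum_le_sum fun t _ => Nat.mul_le_mul (partCount_le t) (ih _)

lemma mp_le_pow (b : ℕ) (hb : 3 ≤ b) : ∀ w, multipartitions b w ≤ b ^ w := by
  induction b, hb using Nat.le_induction with
  | base => exact fun w => (mp_le_U 3 w).trans (W_lemma w)
  | succ b hb ih =>
    intro w
    rw [mp_succ]
    calc (∑ t ∈ range (w+1), partCount t * multipartitions b (w - t))
        ≤ ∑ t ∈ range (w+1), 2 ^ (t-1) * b ^ (w-t) :=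
          Finset.sum_le_sum fun t _ => Nat.mul_le_mul (partCount_le t) (ih _)
      _ ≤ (b+1) ^ w := conv_le b (by omega) w

theorem kSum_le_numLCompositions_mul (ℓ a : ℕ) (hℓ : ℓ.Prime) (hℓ5 : 5 ≤ ℓ)
    (ha : 1 ≤ a) :
    ∀ x : ℕ, 1 ≤ x → kSum ℓ a 1 x ≤ numLCompositions ℓ x * ℓ ^ (a * x) := by
  intro x hx
  have hl1 : 1 ≤ ℓ := by omega
  have hla : 1 ≤ ℓ ^ a := Nat.one_le_pow _ _ (by omega)
  have hlaa : ℓ ^ a = ℓ ^ (a-1) * ℓ := by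
    rw [← pow_succ]
    congr 1
    omega
  have hla1 : 1 ≤ ℓ ^ (a-1) := Nat.one_le_pow _ _ (by omega)
  have hB0 : 1 + (ℓ ^ a - 1) / 1 = ℓ ^ a := by rw [Nat.div_one]; omega
  have hB1 : (ℓ ^ a - ℓ ^ (a-1)) / 1 = ℓ ^ a - ℓ ^ (a-1) := Nat.div_one _
  have hB1ge : 3 ≤ ℓ ^ a - ℓ ^ (a-1) := by
    have h5 : ℓ ^ (a-1) * 5 ≤ ℓ ^ (a-1) * ℓ := Nat.mul_le_mul_left _ hℓ5
    rw [hlaa]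
    omega
  have hB1le : ℓ ^ a - ℓ ^ (a-1) ≤ ℓ ^ a := Nat.sub_le _ _
  have hla3 : 3 ≤ ℓ ^ a := by omega
  -- the set of ℓ-compositions of x
  set S : Set (ℕ →₀ ℕ) := {f : ℕ →₀ ℕ | (f.sum fun i c => c * ℓ ^ i) = x} with hSdef
  have hbound : ∀ f ∈ S, ∀ i : ℕ, f i * ℓ ^ i ≤ x := by
    intro f hf i
    rw [hSdef, Set.mem_setOf_eq] at hf
    rw [← hf, Finsupp.sum]
    by_cases h : i ∈ f.support
    · exact Finset.single_le_sum (f := fun j => f j * ℓ ^ j) (fun _ _ => Nat.zero_le _) h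
    · rw [Finsupp.notMem_support_iff.1 h]
      simp
  have hval : ∀ f ∈ S, ∀ i : ℕ, f i ≤ x := by
    intro f hf i
    have h1 := hbound f hf i
    have h2 : 1 ≤ ℓ ^ i := Nat.one_le_pow _ _ (by omega)
    nlinarith
  have hfin : Finite ↥S := by
    refine Finite.of_injective
      (fun f => (fun i : Fin (x+1) => (⟨min (f.1 i) x, by omega⟩ : Fin (x+1)))) ?_
    intro f g h
    apply Subtype.ext
    ext i
    by_cases hi : i ≤ x
    · have := congrFun h ⟨i, by omega⟩
      simp only [Fin.mk.injEq] at this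
      have h1 := hval f.1 f.2 i
      have h2 := hval g.1 g.2 i
      omega
    · have h1 : f.1 i = 0 := by
        by_contra hne
        have hmem : i ∈ f.1.support := Finsupp.mem_support_iff.2 hne
        have := hbound f.1 f.2 i
        have h2 : 1 ≤ f.1 i := Nat.one_le_iff_ne_zero.2 hne
        have h3 : i < ℓ ^ i := Nat.lt_pow_self (by omega)
        nlinarith
      have h2 : g.1 i = 0 := by
        by_contra hne
        have hmem : i ∈ g.1.support := Finsupp.mem_support_iff.2 hne
        have := hbound g.1 g.2 i
        have h2 : 1 ≤ g.1 i := Nat.one_le_iff_ne_zero.2 hne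
        have h3 : i < ℓ ^ i := Nat.lt_pow_self (by omega)
        nlinarith
      rw [h1, h2]
  have hS : S.Finite := Set.finite_coe_iff.1 hfin
  -- rewrite kSum as a finite sum
  have hkSum : kSum ℓ a 1 x = ∑ f ∈ hS.toFinset,
      multipartitions (1 + (ℓ ^ a - 1) / 1) (f 0) *
        ∏ i ∈ f.support.erase 0, multipartitions ((ℓ ^ a - ℓ ^ (a - 1)) / 1) (f i) := by
    rw [kSum]
    exact finsum_mem_eq_finite_toFinset_sum _ hS
  have hnum : numLCompositions ℓ x = hS.toFinset.card := by
    rw [numLCompositions]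
    exact Nat.card_eq_card_finite_toFinset hS
  rw [hkSum, hnum]
  -- bound each term
  have hterm : ∀ f ∈ hS.toFinset,
      multipartitions (1 + (ℓ ^ a - 1) / 1) (f 0) *
        ∏ i ∈ f.support.erase 0, multipartitions ((ℓ ^ a - ℓ ^ (a - 1)) / 1) (f i)
      ≤ ℓ ^ (a * x) := by
    intro f hf
    rw [Set.Finite.mem_toFinset] at hf
    have hsum : (f.sum fun i c => c * ℓ ^ i) = x := hf
    -- exponent bound
    have hexp : f 0 + ∑ i ∈ f.support.erase 0, f i ≤ x := by
      have h1 : f 0 + ∑ i ∈ f.support.erase 0, f i ≤ ∑ i ∈ f.support, f i := by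
        by_cases h0 : 0 ∈ f.support
        · rw [← Finset.add_sum_erase _ _ h0]
        · rw [Finsupp.notMem_support_iff.1 h0, Finset.erase_eq_of_notMem h0]
          omega
      have h2 : ∑ i ∈ f.support, f i ≤ ∑ i ∈ f.support, f i * ℓ ^ i :=
        Finset.sum_le_sum fun i _ => Nat.le_mul_of_pos_right _ (Nat.one_le_pow _ _ (by omega))
      rw [Finsupp.sum] at hsum
      omega
    calc multipartitions (1 + (ℓ ^ a - 1) / 1) (f 0) *
          ∏ i ∈ f.support.erase 0, multipartitions ((ℓ ^ a - ℓ ^ (a - 1)) / 1) (f i)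
        ≤ (ℓ ^ a) ^ (f 0) * ∏ i ∈ f.support.erase 0, (ℓ ^ a) ^ (f i) := by
          apply Nat.mul_le_mul
          · rw [hB0]
            exact mp_le_pow _ hla3 _
          · apply Finset.prod_le_prod' -- name?
            intro i _
            rw [hB1]
            exact le_trans (mp_le_pow _ hB1ge _) (Nat.pow_le_pow_left hB1le _)
      _ = (ℓ ^ a) ^ (f 0 + ∑ i ∈ f.support.erase 0, f i) := by
          rw [pow_add, Finset.prod_pow_eq_pow_sum]
      _ ≤ (ℓ ^ a) ^ x := Nat.pow_le_pow_right (by omega) hexp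
      _ = ℓ ^ (a * x) := by rw [← pow_mul]
  calc (∑ f ∈ hS.toFinset,
      multipartitions (1 + (ℓ ^ a - 1) / 1) (f 0) *
        ∏ i ∈ f.support.erase 0, multipartitions ((ℓ ^ a - ℓ ^ (a - 1)) / 1) (f i))
      ≤ hS.toFinset.card * ℓ ^ (a * x) := by
        have := Finset.sum_le_card_nsmul hS.toFinset _ _ hterm
        simpa [smul_eq_mul] using this
    _ = hS.toFinset.card * ℓ ^ (a * x) := rfl
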